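/- Let A be an n×n complex matrix, regarded as a linear endomorphism of ℂⁿ. Then for x ∈ ℂⁿ, exp(tA) x → 0 as t → +∞ if and only if x belongs to the sum of the maximal generalized eigenspaces ⋃-span ⨆_{λ : Re λ < 0} ker((A − λI)ⁿ) of A over eigenvalues λ with negative real part. That is, the stable subspace E^s, defined dynamically as the set of initial conditions whose trajectories under ẋ = Ax converge to the origin as t → +∞, equals the span of the generalized eigenvectors of A corresponding to eigenvalues with negative real part. -/

import Mathlib

open scoped BigOperators Matrix

open Filter NormedSpace

namespace StableAux
variable {n : ℕ}

lemma summable_exp_terms (M : Matrix (Fin n) (Fin n) ℂ) :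
    Summable (fun k : ℕ => ((k.factorial : ℂ))⁻¹ • M ^ k) := by
  letI : SeminormedRing (Matrix (Fin n) (Fin n) ℂ) := Matrix.linftyOpSemiNormedRing
  letI : NormedRing (Matrix (Fin n) (Fin n) ℂ) := Matrix.linftyOpNormedRing
  letI : NormedAlgebra ℂ (Matrix (Fin n) (Fin n) ℂ) := Matrix.linftyOpNormedAlgebra
  exact expSeries_summable' (𝕂 := ℂ) M

lemma matrix_exp_eq_tsum (M : Matrix (Fin n) (Fin n) ℂ) :
    exp M = ∑' k : ℕ, ((k.factorial : ℂ))⁻¹ • M ^ k :=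
  congrFun (exp_eq_tsum ℂ) M

noncomputable def mulVecL (x : Fin n → ℂ) :
    Matrix (Fin n) (Fin n) ℂ →L[ℂ] (Fin n → ℂ) :=
  LinearMap.toContinuousLinearMap
    { toFun := fun M => M.mulVec x
      map_add' := fun M N => Matrix.add_mulVec M N x
      map_smul' := fun c M => Matrix.smul_mulVec c M x }

@[simp] lemma mulVecL_apply (x : Fin n → ℂ) (M : Matrix (Fin n) (Fin n) ℂ) :
    mulVecL x M = M.mulVec x := rfl

lemma exp_mulVec_eq_tsum (M : Matrix (Fin n) (Fin n) ℂ) (x : Fin n → ℂ) :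
    (exp M).mulVec x = ∑' k : ℕ, ((k.factorial : ℂ))⁻¹ • (M ^ k).mulVec x := by
  rw [matrix_exp_eq_tsum]
  have := (mulVecL x).map_tsum (summable_exp_terms M)
  simpa [Matrix.smul_mulVec] using this



lemma exp_smul_one (c : ℂ) :
    exp (c • (1 : Matrix (Fin n) (Fin n) ℂ)) = Complex.exp c • 1 := by
  letI : SeminormedRing (Matrix (Fin n) (Fin n) ℂ) := Matrix.linftyOpSemiNormedRing
  letI : NormedRing (Matrix (Fin n) (Fin n) ℂ) := Matrix.linftyOpNormedRing
  letI : NormedAlgebra ℂ (Matrix (Fin n) (Fin n) ℂ) := Matrix.linftyOpNormedAlgebra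
  have h1 : c • (1 : Matrix (Fin n) (Fin n) ℂ) = algebraMap ℂ _ c :=
    (Algebra.algebraMap_eq_smul_one c).symm
  rw [h1, Complex.exp_eq_exp_ℂ, ← Algebra.algebraMap_eq_smul_one]
  exact (algebraMap_exp_comm c).symm

lemma exp_smul_split (t μ : ℂ) (A : Matrix (Fin n) (Fin n) ℂ) :
    exp (t • A) = Complex.exp (t * μ) • exp (t • (A - μ • 1)) := by
  have h1 : t • A = (t * μ) • (1 : Matrix (Fin n) (Fin n) ℂ) + t • (A - μ • 1) := by
    rw [smul_sub, smul_smul]; abel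
  rw [h1, Matrix.exp_add_of_commute _ _ ((Commute.one_left _).smul_left _),
    exp_smul_one, smul_mul_assoc, one_mul]

lemma exp_mulVec_eq_sum (M : Matrix (Fin n) (Fin n) ℂ) (x : Fin n → ℂ) (m : ℕ)
    (h : ∀ k, m ≤ k → (M ^ k).mulVec x = 0) :
    (exp M).mulVec x = ∑ k ∈ Finset.range m, ((k.factorial : ℂ))⁻¹ • (M ^ k).mulVec x := by
  rw [exp_mulVec_eq_tsum]
  exact tsum_eq_sum (fun k hk => by rw [h k (by simpa using hk), smul_zero])

lemma pow_mulVec_mem (M : Matrix (Fin n) (Fin n) ℂ) (p : Submodule ℂ (Fin n → ℂ))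
    (hp : ∀ y ∈ p, M.mulVec y ∈ p) {x : Fin n → ℂ} (hx : x ∈ p) (k : ℕ) :
    (M ^ k).mulVec x ∈ p := by
  induction k with
  | zero => simpa using hx
  | succ k ih =>
      have : (M ^ (k + 1)).mulVec x = M.mulVec ((M ^ k).mulVec x) := by
        rw [Matrix.mulVec_mulVec, ← pow_succ']
      rw [this]
      exact hp _ ih

lemma exp_mulVec_mem (M : Matrix (Fin n) (Fin n) ℂ) (p : Submodule ℂ (Fin n → ℂ))
    (hp : ∀ y ∈ p, M.mulVec y ∈ p) {x : Fin n → ℂ} (hx : x ∈ p) :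
    (exp M).mulVec x ∈ p := by
  rw [exp_mulVec_eq_tsum]
  have hs : Summable (fun k : ℕ => ((k.factorial : ℂ))⁻¹ • (M ^ k).mulVec x) := by
    have := (summable_exp_terms M).map (mulVecL x) (mulVecL x).continuous
    refine this.congr fun k => ?_
    simp [Function.comp, Matrix.smul_mulVec]
  have hclosed : IsClosed (p : Set (Fin n → ℂ)) := p.closed_of_finiteDimensional
  refine hclosed.mem_of_tendsto hs.hasSum.tendsto_sum_nat
    (Filter.Eventually.of_forall fun N => ?_)
  exact Submodule.sum_mem p fun k _ => p.smul_mem _ (pow_mulVec_mem M p hp hx k)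


lemma real_decay (k : ℕ) {c : ℝ} (hc : c < 0) :
    Tendsto (fun t : ℝ => t ^ k * Real.exp (t * c)) atTop (nhds 0) := by
  have h2 : Tendsto (fun t : ℝ => -c * t) atTop atTop :=
    tendsto_id.const_mul_atTop (by linarith)
  have h1 : Tendsto (fun t : ℝ => (-c * t) ^ k * Real.exp (-(-c * t))) atTop (nhds 0) :=
    (Real.tendsto_pow_mul_exp_neg_atTop_nhds_zero k).comp h2
  have h3 := h1.const_mul ((-c) ^ k)⁻¹
  rw [mul_zero] at h3
  refine h3.congr fun t => ?_
  have hck : ((-c) ^ k) ≠ 0 := pow_ne_zero _ (by linarith)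
  field_simp [mul_pow]
  ring_nf

lemma complex_coef_decay (k : ℕ) {μ : ℂ} (hμ : μ.re < 0) :
    Tendsto (fun t : ℝ => Complex.exp ((t : ℂ) * μ) * (t : ℂ) ^ k) atTop (nhds 0) := by
  rw [tendsto_zero_iff_norm_tendsto_zero]
  have key : ∀ᶠ t : ℝ in atTop, ‖Complex.exp ((t : ℂ) * μ) * (t : ℂ) ^ k‖
      = t ^ k * Real.exp (t * μ.re) := by
    filter_upwards [eventually_ge_atTop (0:ℝ)] with t ht
    rw [norm_mul, Complex.norm_exp, norm_pow, Complex.norm_real,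
      Real.norm_of_nonneg ht]
    simp [mul_comm]
  exact (real_decay k hμ).congr' (key.mono fun t h => h.symm)



lemma pow_smul_vanish (B : Matrix (Fin n) (Fin n) ℂ) (x : Fin n → ℂ)
    (hx : (B ^ n).mulVec x = 0) (t : ℂ) :
    ∀ k, n ≤ k → ((t • B) ^ k).mulVec x = 0 := by
  intro k hk
  rw [smul_pow, Matrix.smul_mulVec]
  have : B ^ k = B ^ (k - n) * B ^ n := by rw [← pow_add]; congr 1; omega
  rw [this, ← Matrix.mulVec_mulVec, hx, Matrix.mulVec_zero, smul_zero]

lemma exp_smul_mulVec_eq (A : Matrix (Fin n) (Fin n) ℂ) (μ : ℂ) (x : Fin n → ℂ) (m : ℕ)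
    (hvan : ∀ k, m ≤ k → ((A - μ • 1) ^ k).mulVec x = 0) (t : ℝ) :
    (exp ((t : ℂ) • A)).mulVec x
      = ∑ k ∈ Finset.range m, (Complex.exp ((t : ℂ) * μ) * (t : ℂ) ^ k * ((k.factorial : ℂ))⁻¹)
          • ((A - μ • 1) ^ k).mulVec x := by
  have hv : ∀ k, m ≤ k → (((t : ℂ) • (A - μ • 1)) ^ k).mulVec x = 0 := by
    intro k hk
    rw [smul_pow, Matrix.smul_mulVec, hvan k hk, smul_zero]
  rw [exp_smul_split (t : ℂ) μ A, Matrix.smul_mulVec,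
    exp_mulVec_eq_sum _ _ m hv, Finset.smul_sum]
  refine Finset.sum_congr rfl fun k _ => ?_
  rw [smul_pow, Matrix.smul_mulVec, smul_smul, smul_smul]
  ring_nf

lemma tendsto_of_mem_gen (A : Matrix (Fin n) (Fin n) ℂ) {μ : ℂ} (hμ : μ.re < 0)
    (x : Fin n → ℂ) (hx : ((A - μ • 1) ^ n).mulVec x = 0) :
    Tendsto (fun t : ℝ => (exp ((t : ℂ) • A)).mulVec x) atTop (nhds 0) := by
  have hvan : ∀ k, n ≤ k → ((A - μ • 1) ^ k).mulVec x = 0 := by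
    intro k hk
    have : (A - μ • 1) ^ k = (A - μ • 1) ^ (k - n) * (A - μ • 1) ^ n := by
      rw [← pow_add]; congr 1; omega
    rw [this, ← Matrix.mulVec_mulVec, hx, Matrix.mulVec_zero]
  have key := exp_smul_mulVec_eq A μ x n hvan
  rw [show (fun t : ℝ => (exp ((t : ℂ) • A)).mulVec x) = _ from funext key]
  have h0 : (0 : Fin n → ℂ) = ∑ k ∈ Finset.range n, (0 : Fin n → ℂ) := by simp
  rw [h0]
  refine tendsto_finset_sum _ fun k _ => ?_
  have hc : Tendsto (fun t : ℝ => Complex.exp ((t : ℂ) * μ) * (t : ℂ) ^ k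
      * ((k.factorial : ℂ))⁻¹) atTop (nhds 0) := by
    simpa using (complex_coef_decay k hμ).mul_const ((k.factorial : ℂ))⁻¹
  simpa using hc.smul_const (((A - μ • 1) ^ k).mulVec x)



lemma tendsto_component (A : Matrix (Fin n) (Fin n) ℂ) (p q : Submodule ℂ (Fin n → ℂ))
    (h : IsCompl p q)
    (hp : ∀ y ∈ p, A.mulVec y ∈ p) (hq : ∀ y ∈ q, A.mulVec y ∈ q)
    {a b : Fin n → ℂ} (ha : a ∈ p) (hb : b ∈ q)
    (hT : Tendsto (fun t : ℝ => (exp ((t : ℂ) • A)).mulVec (a + b)) atTop (nhds 0)) :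
    Tendsto (fun t : ℝ => (exp ((t : ℂ) • A)).mulVec a) atTop (nhds 0) := by
  set e : (Fin n → ℂ) →ₗ[ℂ] (Fin n → ℂ) := p.subtype.comp (p.projectionOnto q h) with he
  have hcont : Continuous e := e.continuous_of_finiteDimensional
  have key : ∀ t : ℝ, e ((exp ((t : ℂ) • A)).mulVec (a + b))
      = (exp ((t : ℂ) • A)).mulVec a := by
    intro t
    have hpt : ∀ y ∈ p, ((t : ℂ) • A).mulVec y ∈ p := fun y hy => by
      rw [Matrix.smul_mulVec]; exact p.smul_mem _ (hp y hy)
    have hqt : ∀ y ∈ q, ((t : ℂ) • A).mulVec y ∈ q := fun y hy => by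
      rw [Matrix.smul_mulVec]; exact q.smul_mem _ (hq y hy)
    have hma : (exp ((t : ℂ) • A)).mulVec a ∈ p := exp_mulVec_mem _ p hpt ha
    have hmb : (exp ((t : ℂ) • A)).mulVec b ∈ q := exp_mulVec_mem _ q hqt hb
    rw [Matrix.mulVec_add, map_add]
    have h1 : e ((exp ((t : ℂ) • A)).mulVec a) = (exp ((t : ℂ) • A)).mulVec a := by
      simp only [he, LinearMap.comp_apply, Submodule.subtype_apply]
      rw [Submodule.projectionOnto_apply_left h ⟨_, hma⟩]
    have h2 : e ((exp ((t : ℂ) • A)).mulVec b) = 0 := by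
      simp only [he, LinearMap.comp_apply, Submodule.subtype_apply]
      rw [Submodule.projectionOnto_apply_right h ⟨_, hmb⟩]
      rfl
    rw [h1, h2, add_zero]
  have := (hcont.tendsto 0).comp hT
  rw [map_zero] at this
  exact this.congr key



open Finset in
lemma eq_zero_of_tendsto (A : Matrix (Fin n) (Fin n) ℂ) {μ : ℂ} (hμ : 0 ≤ μ.re)
    {y : Fin n → ℂ} (hy : ((A - μ • 1) ^ n).mulVec y = 0)
    (hT : Tendsto (fun t : ℝ => (exp ((t : ℂ) • A)).mulVec y) atTop (nhds 0)) :
    y = 0 := by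
  classical
  by_contra hne
  set B := A - μ • 1 with hB
  set v : ℕ → (Fin n → ℂ) := fun k => (B ^ k).mulVec y with hv
  have hvn : ∀ k, n ≤ k → v k = 0 := by
    intro k hk
    have : B ^ k = B ^ (k - n) * B ^ n := by rw [← pow_add]; congr 1; omega
    simp only [hv, this, ← Matrix.mulVec_mulVec, hy, Matrix.mulVec_zero]
  have h0 : v 0 ≠ 0 := by simpa [hv, Matrix.one_mulVec] using hne
  set m := Nat.findGreatest (fun k => v k ≠ 0) n with hm
  have hvm : v m ≠ 0 := by
    have := Nat.findGreatest_spec (P := fun k => v k ≠ 0) (Nat.zero_le n) h0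
    simpa [hm] using this
  have hgt : ∀ k, m < k → v k = 0 := by
    intro k hk
    by_cases hkn : k ≤ n
    · by_contra hne'
      exact Nat.findGreatest_is_greatest (P := fun k => v k ≠ 0) hk hkn hne'
    · exact hvn k (by omega)
  obtain ⟨i, hvmi⟩ := Function.ne_iff.mp hvm
  set c : ℕ → ℂ := fun k => ((k.factorial : ℂ))⁻¹ * v k i with hc
  have hcm : c m ≠ 0 :=
    mul_ne_zero (inv_ne_zero (Nat.cast_ne_zero.2 m.factorial_ne_zero)) hvmi
  set φ : ℝ → ℂ := fun t => ∑ k ∈ range (m + 1), (t : ℂ) ^ k * c k with hφ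
  have key : ∀ t : ℝ, ((exp ((t : ℂ) • A)).mulVec y) i = Complex.exp ((t : ℂ) * μ) * φ t := by
    intro t
    have hvan : ∀ k, m + 1 ≤ k → (B ^ k).mulVec y = 0 := fun k hk => hgt k (by omega)
    rw [exp_smul_mulVec_eq A μ y (m + 1) hvan t]
    rw [Finset.sum_apply, hφ, Finset.mul_sum]
    refine Finset.sum_congr rfl fun k _ => ?_
    simp only [Pi.smul_apply, smul_eq_mul, hc, hv]
    ring
  -- φ tends to 0
  have hφ0 : Tendsto φ atTop (nhds 0) := by
    have h1 : Tendsto (fun t : ℝ => ((exp ((t : ℂ) • A)).mulVec y) i) atTop (nhds 0) := by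
      have := ((continuous_apply i).tendsto 0).comp hT
      simpa [Function.comp_def] using this
    rw [tendsto_zero_iff_norm_tendsto_zero]
    have h2 : Tendsto (fun t : ℝ => ‖Complex.exp ((t : ℂ) * μ) * φ t‖) atTop (nhds 0) := by
      rw [← tendsto_zero_iff_norm_tendsto_zero]
      exact h1.congr fun t => key t
    refine squeeze_zero' (Filter.Eventually.of_forall fun t => norm_nonneg _) ?_ h2
    filter_upwards [eventually_ge_atTop (0 : ℝ)] with t ht
    rw [norm_mul, Complex.norm_exp]
    have : (1 : ℝ) ≤ Real.exp (((t : ℂ) * μ).re) := by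
      rw [Real.one_le_exp_iff]
      have : ((t : ℂ) * μ).re = t * μ.re := by simp
      rw [this]
      positivity
    nlinarith [norm_nonneg (φ t)]
  -- inverse powers
  have hinv : Tendsto (fun t : ℝ => ((t⁻¹ : ℝ) : ℂ)) atTop (nhds 0) := by
    have := Complex.continuous_ofReal.tendsto (0 : ℝ)
    have h2 := this.comp tendsto_inv_atTop_zero
    simpa [Function.comp_def] using h2
  set g : ℝ → ℂ := fun t => ∑ k ∈ range (m + 1), ((t⁻¹ : ℝ) : ℂ) ^ (m - k) * c k with hg
  have h1 : Tendsto g atTop (nhds (c m)) := by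
    have h2 : Tendsto g atTop (nhds (∑ k ∈ range (m + 1), (0 : ℂ) ^ (m - k) * c k)) :=
      tendsto_finset_sum _ fun k _ => (hinv.pow (m - k)).mul_const (c k)
    have h3 : ∑ k ∈ range (m + 1), (0 : ℂ) ^ (m - k) * c k = c m := by
      rw [Finset.sum_eq_single m]
      · simp
      · intro k hk hkm
        have : 0 < m - k := by
          have := Finset.mem_range.mp hk
          omega
        rw [zero_pow (by omega), zero_mul]
      · intro h; exact absurd (Finset.self_mem_range_succ m) h
    rwa [h3] at h2
  have h2 : Tendsto g atTop (nhds 0) := by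
    have h3 : Tendsto (fun t : ℝ => φ t * ((t⁻¹ : ℝ) : ℂ) ^ m) atTop (nhds 0) := by
      have := hφ0.mul (hinv.pow m)
      simpa using this
    refine h3.congr' ?_
    filter_upwards [eventually_ge_atTop (1 : ℝ)] with t ht
    have htne : (t : ℂ) ≠ 0 := by
      simpa using (by linarith : t ≠ 0)
    rw [hφ, hg, Finset.sum_mul]
    refine Finset.sum_congr rfl fun k hk => ?_
    have hkm : k ≤ m := by
      have := Finset.mem_range.mp hk; omega
    have : ((t⁻¹ : ℝ) : ℂ) = ((t : ℂ))⁻¹ := by push_cast; ring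
    rw [this]
    rw [show (t : ℂ) ^ k * c k * ((t : ℂ))⁻¹ ^ m = ((t : ℂ))⁻¹ ^ (m - k) * c k from ?_]
    field_simp
    have hm' : (1 / (t : ℂ)) ^ m = (1 / (t : ℂ)) ^ k * (1 / (t : ℂ)) ^ (m - k) := by
      rw [← pow_add]; congr 1; omega
    rw [hm', ← mul_assoc, mul_right_comm _ (c k), ← mul_pow, mul_one_div_cancel htne, one_pow,
      one_mul]
  exact hcm (tendsto_nhds_unique h1 h2)



end StableAux

open StableAux in
/-- Dynamical characterization of the stable subspace of `ẋ = Ax`: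
`exp(tA)x → 0` as `t → +∞` iff `x` lies in the sum of the maximal generalized
eigenspaces of `A` over eigenvalues with negative real part. -/
theorem stable_subspace_eq_sum_generalized_eigenspaces {n : ℕ}
    (A : Matrix (Fin n) (Fin n) ℂ) (x : Fin n → ℂ) :
    Filter.Tendsto (fun t : ℝ => (NormedSpace.exp ((t : ℂ) • A)).mulVec x)
        Filter.atTop (nhds 0)
      ↔ x ∈ ⨆ lam : {μ : ℂ // μ.re < 0},
          LinearMap.ker (Matrix.toLin' ((A - (lam : ℂ) • 1) ^ n)) := by
  classical
  set f : Module.End ℂ (Fin n → ℂ) := Matrix.toLin' A with hf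
  have hpowEnd : ∀ (M : Matrix (Fin n) (Fin n) ℂ) (k : ℕ),
      Matrix.toLin' (M ^ k) = (Matrix.toLin' M : Module.End ℂ (Fin n → ℂ)) ^ k := by
    intro M k
    induction k with
    | zero => rw [pow_zero, pow_zero, Matrix.toLin'_one]; rfl
    | succ k ih => rw [pow_succ, pow_succ, Matrix.toLin'_mul, ih]; rfl
  have hsub : ∀ μ : ℂ, Matrix.toLin' (A - μ • 1) = f - μ • 1 := by
    intro μ
    apply LinearMap.ext; intro v
    simp [Matrix.toLin'_apply, Matrix.sub_mulVec, Matrix.smul_mulVec,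
      Matrix.one_mulVec, hf, LinearMap.sub_apply, LinearMap.smul_apply]
  have hker : ∀ μ : ℂ, LinearMap.ker (Matrix.toLin' ((A - μ • 1) ^ n))
      = f.maxGenEigenspace μ := by
    intro μ
    rw [hpowEnd, hsub]
    have h1 := Module.End.maxGenEigenspace_eq_genEigenspace_finrank f μ
    have h2 : Module.finrank ℂ (Fin n → ℂ) = n := by simp
    rw [h1, h2, Module.End.genEigenspace_nat]
  have hmemker : ∀ (μ : ℂ) (y : Fin n → ℂ),
      y ∈ LinearMap.ker (Matrix.toLin' ((A - μ • 1) ^ n)) ↔ ((A - μ • 1) ^ n).mulVec y = 0 := by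
    intro μ y
    rw [LinearMap.mem_ker, Matrix.toLin'_apply]
  constructor
  · intro hT
    have hx : x ∈ ⨆ μ : ℂ, f.maxGenEigenspace μ := by
      rw [Module.End.iSup_maxGenEigenspace_eq_top]; trivial
    obtain ⟨d, hd, hsum⟩ := (Submodule.mem_iSup_iff_exists_finsupp _ x).mp hx
    have hbad : ∀ μ : ℂ, ¬ μ.re < 0 → d μ = 0 := by
      intro μ hμ
      set q : Submodule ℂ (Fin n → ℂ) :=
        ⨆ ν : {ν : ℂ // ν ≠ μ}, f.maxGenEigenspace ↑ν with hq
      have hqeq : q = ⨆ (ν) (_ : ν ≠ μ), f.maxGenEigenspace ν := by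
        rw [hq, iSup_subtype]
      have hdisj : Disjoint (f.maxGenEigenspace μ) q := by
        rw [hqeq]
        exact f.independent_maxGenEigenspace μ
      have hcodis : f.maxGenEigenspace μ ⊔ q = ⊤ := by
        rw [← Module.End.iSup_maxGenEigenspace_eq_top f]
        refine le_antisymm (sup_le (le_iSup _ μ) ?_) (iSup_le fun ν => ?_)
        · rw [hqeq]
          exact iSup_le fun ν => iSup_le fun _ => le_iSup _ ν
        · by_cases hν : ν = μ
          · subst hν; exact le_sup_left
          · refine le_sup_of_le_right ?_
            rw [hqeq]
            exact le_iSup_of_le ν (le_iSup (fun _ : ν ≠ μ => f.maxGenEigenspace ν) hν)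
      have hIsCompl : IsCompl (f.maxGenEigenspace μ) q := ⟨hdisj, codisjoint_iff.mpr hcodis⟩
      have hmapsTo : ∀ ν : ℂ, ∀ y ∈ f.maxGenEigenspace ν, f y ∈ f.maxGenEigenspace ν :=
        fun ν y hy => Module.End.mapsTo_maxGenEigenspace_of_comm (Commute.refl f) ν hy
      have hfA : ∀ y : Fin n → ℂ, A.mulVec y = f y := fun y => (Matrix.toLin'_apply A y).symm
      have hpinv : ∀ y ∈ f.maxGenEigenspace μ, A.mulVec y ∈ f.maxGenEigenspace μ := by
        intro y hy; rw [hfA]; exact hmapsTo μ y hy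
      have hqinv : ∀ y ∈ q, A.mulVec y ∈ q := by
        intro y hy
        rw [hfA]
        have hmap : q.map f ≤ q := by
          rw [hq, Submodule.map_iSup]
          exact iSup_le fun ν => le_trans
            (Submodule.map_le_iff_le_comap.mpr fun z hz => Submodule.mem_comap.mpr (hmapsTo (↑ν) z hz))
            (le_iSup (fun ν : {ν : ℂ // ν ≠ μ} => f.maxGenEigenspace ↑ν) ν)
        exact hmap (Submodule.mem_map_of_mem hy)
      have hbq : x - d μ ∈ q := by
        have hrepr : x - d μ = ∑ ν ∈ d.support.erase μ, d ν := by
          rw [← hsum, Finsupp.sum]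
          by_cases hμs : μ ∈ d.support
          · rw [← Finset.add_sum_erase _ _ hμs, add_sub_cancel_left]
          · rw [Finset.erase_eq_of_notMem hμs, Finsupp.notMem_support_iff.mp hμs, sub_zero]
        rw [hrepr]
        exact Submodule.sum_mem _ fun ν hν =>
          Submodule.mem_iSup_of_mem ⟨ν, (Finset.mem_erase.mp hν).1⟩ (hd ν)
      have hT' : Tendsto (fun t : ℝ => (exp ((t : ℂ) • A)).mulVec (d μ + (x - d μ)))
          atTop (nhds 0) := by
        simpa [add_sub_cancel] using hT
      have hcomp := tendsto_component A _ q hIsCompl hpinv hqinv (hd μ) hbq hT'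
      refine eq_zero_of_tendsto A (not_lt.mp hμ) ?_ hcomp
      have hmem := hd μ
      rw [← hker μ] at hmem
      exact (hmemker μ (d μ)).mp hmem
    rw [← hsum, Finsupp.sum]
    refine Submodule.sum_mem _ fun ν _ => ?_
    by_cases hν : ν.re < 0
    · refine Submodule.mem_iSup_of_mem ⟨ν, hν⟩ ?_
      rw [hker ν]
      exact hd ν
    · rw [hbad ν hν]
      exact Submodule.zero_mem _
  · intro hx
    set T : Submodule ℂ (Fin n → ℂ) :=
      { carrier := {y | Tendsto (fun t : ℝ => (exp ((t : ℂ) • A)).mulVec y) atTop (nhds 0)}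
        add_mem' := fun {y} {z} hy hz => by
          simpa [Matrix.mulVec_add] using hy.add hz
        zero_mem' := by
          simp only [Set.mem_setOf_eq, Matrix.mulVec_zero]
          exact tendsto_const_nhds
        smul_mem' := fun c y hy => by
          simpa [Matrix.mulVec_smul] using hy.const_smul c } with hTdef
    have hle : (⨆ lam : {μ : ℂ // μ.re < 0},
        LinearMap.ker (Matrix.toLin' ((A - (lam : ℂ) • 1) ^ n))) ≤ T := by
      refine iSup_le fun lam y hy => ?_
      exact tendsto_of_mem_gen A lam.2 y ((hmemker lam.1 y).mp hy)
    exact hle hx
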